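/- Summation-by-parts identity for the quadratic form of D: if l ≤ k in ℤ and f : ℤ → ℂ is supported in [l,k] = {x ∈ ℤ : l ≤ x ≤ k}, then ⟨Df, f⟩ = − Σ_{x=l}^{k} |√(μ(x+1))·f(x+1) − √(λ(x))·f(x)|² − μ(l)·|f(l)|². -/

import Mathlib

/-- The difference operator `D` acting pointwise on functions `ℤ → ℂ`. -/
noncomputable def Dop (μ lam : ℤ → ℝ) (f : ℤ → ℂ) (x : ℤ) : ℂ :=
  (Real.sqrt (μ (x + 1) * lam x) : ℂ) * f (x + 1)
    - ((μ x + lam x : ℝ) : ℂ) * f x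
    + (Real.sqrt (μ x * lam (x - 1)) : ℂ) * f (x - 1)

lemma sum_shift_sub (g : ℤ → ℂ) (a b : ℤ) :
    ∑ x ∈ Finset.Icc a b, g (x - 1) = ∑ x ∈ Finset.Icc (a - 1) (b - 1), g x := by
  rw [show Finset.Icc (a - 1) (b - 1) = (Finset.Icc a b).image (fun x => x + (-1)) by
      rw [Finset.image_add_right_Icc]; congr 1 <;> ring,
    Finset.sum_image (by intro x _ y _ h; exact add_right_cancel h)]
  exact Finset.sum_congr rfl fun x _ => by rw [sub_eq_add_neg]

lemma sum_shift_add (g : ℤ → ℂ) (a b : ℤ) :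
    ∑ x ∈ Finset.Icc a b, g (x + 1) = ∑ x ∈ Finset.Icc (a + 1) (b + 1), g x := by
  rw [show Finset.Icc (a + 1) (b + 1) = (Finset.Icc a b).image (fun x => x + 1) by
      rw [Finset.image_add_right_Icc],
    Finset.sum_image (by intro x _ y _ h; exact add_right_cancel h)]

lemma sum_Icc_back (g : ℤ → ℂ) (l k : ℤ) (hlk : l ≤ k) (h1 : g (l - 1) = 0) (h2 : g k = 0) :
    ∑ x ∈ Finset.Icc (l - 1) (k - 1), g x = ∑ x ∈ Finset.Icc l k, g x := by
  have e1 : Finset.Icc (l - 1) (k - 1) = insert (l - 1) (Finset.Icc l (k - 1)) := by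
    ext x; simp only [Finset.mem_Icc, Finset.mem_insert]; omega
  have e2 : Finset.Icc l k = insert k (Finset.Icc l (k - 1)) := by
    ext x; simp only [Finset.mem_Icc, Finset.mem_insert]; omega
  rw [e1, e2, Finset.sum_insert (by simp only [Finset.mem_Icc]; omega),
    Finset.sum_insert (by simp only [Finset.mem_Icc]; omega), h1, h2, zero_add]

lemma sum_Icc_fwd (g : ℤ → ℂ) (l k : ℤ) (hlk : l ≤ k) (h2 : g (k + 1) = 0) :
    ∑ x ∈ Finset.Icc (l + 1) (k + 1), g x = ∑ x ∈ Finset.Icc l k, g x - g l := by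
  have e1 : Finset.Icc (l + 1) (k + 1) = insert (k + 1) (Finset.Icc (l + 1) k) := by
    ext x; simp only [Finset.mem_Icc, Finset.mem_insert]; omega
  have e2 : Finset.Icc l k = insert l (Finset.Icc (l + 1) k) := by
    ext x; simp only [Finset.mem_Icc, Finset.mem_insert]; omega
  rw [e1, e2, Finset.sum_insert (by simp only [Finset.mem_Icc]; omega),
    Finset.sum_insert (by simp only [Finset.mem_Icc]; omega), h2, zero_add]
  ring

/-- Summation-by-parts identity for the quadratic form of `D`: if `f` is supported in
`[l,k]` then `⟨Df, f⟩ = −Σ_{x=l}^{k} |√(μ(x+1))·f(x+1) − √(λ(x))·f(x)|² − μ(l)·|f(l)|²`,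
where `⟨f, g⟩ = Σ_x f(x)·conj(g(x))`. -/
theorem Dop_summation_by_parts (μ lam : ℤ → ℝ) (hμ : ∀ x, 0 < μ x) (hlam : ∀ x, 0 < lam x)
    (l k : ℤ) (hlk : l ≤ k) (f : ℤ → ℂ) (hsupp : Function.support f ⊆ Set.Icc l k) :
    ∑' x : ℤ, Dop μ lam f x * (starRingEnd ℂ) (f x)
      = -((∑ x ∈ Finset.Icc l k,
            ‖(Real.sqrt (μ (x + 1)) : ℂ) * f (x + 1) - (Real.sqrt (lam x) : ℂ) * f x‖ ^ 2 : ℝ) : ℂ)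
        - ((μ l * ‖f l‖ ^ 2 : ℝ) : ℂ) := by
  classical
  have hf : ∀ x : ℤ, x ∉ Finset.Icc l k → f x = 0 := by
    intro x hx
    by_contra h
    exact hx (Finset.mem_Icc.mpr (hsupp h))
  rw [tsum_eq_sum (s := Finset.Icc l k) (fun x hx => by rw [hf x hx]; simp)]
  set P : ℤ → ℂ := fun x => ((μ x : ℝ) : ℂ) * (f x * (starRingEnd ℂ) (f x)) with hP
  set R : ℤ → ℂ := fun x => ((lam x : ℝ) : ℂ) * (f x * (starRingEnd ℂ) (f x)) with hR
  set Q : ℤ → ℂ := fun x =>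
    ((Real.sqrt (μ (x + 1) * lam x) : ℝ) : ℂ) * (f x * (starRingEnd ℂ) (f (x + 1))) with hQ
  set Q' : ℤ → ℂ := fun x =>
    ((Real.sqrt (μ (x + 1) * lam x) : ℝ) : ℂ) * (f (x + 1) * (starRingEnd ℂ) (f x)) with hQ'
  have hnorm : ∀ z : ℂ, ((‖z‖ ^ 2 : ℝ) : ℂ) = z * (starRingEnd ℂ) z := by
    intro z
    rw [Complex.mul_conj, Complex.normSq_eq_norm_sq]
  have hL : ∀ x : ℤ, Dop μ lam f x * (starRingEnd ℂ) (f x)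
      = Q' x + Q (x - 1) - (P x + R x) := by
    intro x
    simp only [Dop, hP, hR, hQ, hQ', sub_add_cancel]
    push_cast
    ring
  have hRt : ∀ x : ℤ,
      ((‖(Real.sqrt (μ (x + 1)) : ℂ) * f (x + 1) - (Real.sqrt (lam x) : ℂ) * f x‖ ^ 2 : ℝ) : ℂ)
      = P (x + 1) + R x - Q' x - Q x := by
    intro x
    rw [hnorm]
    have c1 : ((Real.sqrt (μ (x + 1)) : ℝ) : ℂ) * ((Real.sqrt (μ (x + 1)) : ℝ) : ℂ)
        = ((μ (x + 1) : ℝ) : ℂ) := by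
      rw [← Complex.ofReal_mul, Real.mul_self_sqrt (hμ _).le]
    have c2 : ((Real.sqrt (lam x) : ℝ) : ℂ) * ((Real.sqrt (lam x) : ℝ) : ℂ)
        = ((lam x : ℝ) : ℂ) := by
      rw [← Complex.ofReal_mul, Real.mul_self_sqrt (hlam _).le]
    have c3 : ((Real.sqrt (μ (x + 1)) : ℝ) : ℂ) * ((Real.sqrt (lam x) : ℝ) : ℂ)
        = ((Real.sqrt (μ (x + 1) * lam x) : ℝ) : ℂ) := by
      rw [← Complex.ofReal_mul, ← Real.sqrt_mul (hμ _).le]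
    simp only [hP, hR, hQ, hQ', map_sub, map_mul, Complex.conj_ofReal]
    linear_combination (f (x + 1) * (starRingEnd ℂ) (f (x + 1))) * c1
      + (f x * (starRingEnd ℂ) (f x)) * c2
      - (f (x + 1) * (starRingEnd ℂ) (f x) + f x * (starRingEnd ℂ) (f (x + 1))) * c3
  rw [Finset.sum_congr rfl fun x _ => hL x, Complex.ofReal_sum,
    Finset.sum_congr rfl fun x _ => hRt x]
  have hQshift : ∑ x ∈ Finset.Icc l k, Q (x - 1) = ∑ x ∈ Finset.Icc l k, Q x := by
    rw [sum_shift_sub Q l k]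
    refine sum_Icc_back Q l k hlk ?_ ?_
    · simp only [hQ]
      rw [hf (l - 1) (by simp only [Finset.mem_Icc]; omega)]
      ring
    · simp only [hQ]
      rw [hf (k + 1) (by simp only [Finset.mem_Icc]; omega)]
      simp
  have hPshift : ∑ x ∈ Finset.Icc l k, P (x + 1)
      = ∑ x ∈ Finset.Icc l k, P x - P l := by
    rw [sum_shift_add P l k]
    refine sum_Icc_fwd P l k hlk ?_
    simp only [hP]
    rw [hf (k + 1) (by simp only [Finset.mem_Icc]; omega)]
    ring
  have hcast : ((μ l * ‖f l‖ ^ 2 : ℝ) : ℂ) = P l := by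
    rw [Complex.ofReal_mul, hnorm, hP]
  simp only [Finset.sum_add_distrib, Finset.sum_sub_distrib]
  rw [hQshift, hPshift, hcast]
  ring
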